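/- arXiv:1207.5086 — 4 statements merged into one kernel-verified Lean document; each statement's English description precedes it below -/
import Mathlib

section
/- For discrete probability distributions μ1 on a finite set S1 and μ2 on a finite set S2, and a relation R ⊆ S1 × S2, there exists a weight function w : S1 × S2 → [0,1] with (i) μ1(s1) = Σ_{s2} w(s1,s2) for all s1, (ii) μ2(s2) = Σ_{s1} w(s1,s2) for all s2, and (iii) w(s1,s2) > 0 implies (s1,s2) ∈ R, if and only if for every subset S ⊆ supp(μ1), μ1(S) ≤ μ2(R(S)), where R(S) = {s2 | ∃ s1 ∈ S, (s1,s2) ∈ R}. -/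
open Classical

structure FDist (S : Type) [Fintype S] where
  pmf : S → ℝ
  nonneg : ∀ s, 0 ≤ pmf s
  sum_one : ∑ s, pmf s = 1

namespace FDist

variable {S S1 S2 : Type} [Fintype S] [Fintype S1] [Fintype S2]

noncomputable def prob (μ : FDist S) (T : Set S) : ℝ :=
  ∑ s, if s ∈ T then μ.pmf s else 0

def supp (μ : FDist S) : Set S := {s | 0 < μ.pmf s}

noncomputable def dirac (s : S) : FDist S where
  pmf t := if t = s then 1 else 0
  nonneg t := by (try dsimp only); split <;> norm_num
  sum_one := by simp

noncomputable def prod (μ1 : FDist S1) (μ2 : FDist S2) : FDist (S1 × S2) where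
  pmf p := μ1.pmf p.1 * μ2.pmf p.2
  nonneg p := mul_nonneg (μ1.nonneg _) (μ2.nonneg _)
  sum_one := by
    rw [Fintype.sum_prod_type]
    simp_rw [← Finset.mul_sum, μ2.sum_one, mul_one]
    exact μ1.sum_one

end FDist

/-- Image of a set under a relation: `R(T) = {s2 | ∃ s1 ∈ T, (s1,s2) ∈ R}`. -/
def relImage {S1 S2 : Type} (R : Set (S1 × S2)) (T : Set S1) : Set S2 :=
  {s2 | ∃ s1 ∈ T, (s1, s2) ∈ R}

/-- The lifting `μ1 ⊑_R μ2` of a relation on states to distributions,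
via the Hall-type subset condition. -/
def liftRel {S1 S2 : Type} [Fintype S1] [Fintype S2]
    (R : Set (S1 × S2)) (μ1 : FDist S1) (μ2 : FDist S2) : Prop :=
  ∀ T ⊆ μ1.supp, μ1.prob T ≤ μ2.prob (relImage R T)

/-- A (finite, finitely-branching) labeled probabilistic transition system. -/
structure LPTS (S : Type) (Act : Type) [Fintype S] where
  start : S
  alpha : Set Act
  trans : S → Act → Set (FDist S)
  trans_mem : ∀ s a μ, μ ∈ trans s a → a ∈ alpha
  finite_trans : ∀ s a, (trans s a).Finite

/-- `R` is a strong simulation between `L1` and `L2`. -/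
def StrongSim {S1 S2 Act : Type} [Fintype S1] [Fintype S2]
    (L1 : LPTS S1 Act) (L2 : LPTS S2 Act) (R : Set (S1 × S2)) : Prop :=
  ∀ s1 s2, (s1, s2) ∈ R → ∀ a μ1, μ1 ∈ L1.trans s1 a →
    ∃ μ2 ∈ L2.trans s2 a, liftRel R μ1 μ2

/-- `L2` strongly simulates `L1` (written `L1 ≼ L2`). -/
def Sim {S1 S2 Act : Type} [Fintype S1] [Fintype S2]
    (L1 : LPTS S1 Act) (L2 : LPTS S2 Act) : Prop :=
  ∃ R, StrongSim L1 L2 R ∧ (L1.start, L2.start) ∈ R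

/-- `μ1 ⊑_R μ2` via existence of a weight function with marginals `μ1`, `μ2`
and support contained in `R`. -/
def hasWeight {S1 S2 : Type} [Fintype S1] [Fintype S2]
    (R : Set (S1 × S2)) (μ1 : FDist S1) (μ2 : FDist S2) : Prop :=
  ∃ w : S1 × S2 → ℝ,
    (∀ p, 0 ≤ w p ∧ w p ≤ 1) ∧
    (∀ s1, μ1.pmf s1 = ∑ s2, w (s1, s2)) ∧
    (∀ s2, μ2.pmf s2 = ∑ s1, w (s1, s2)) ∧
    (∀ p, 0 < w p → p ∈ R)

section HallAuxSection
set_option linter.unusedSectionVars false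
open Classical Finset

namespace HallAux

variable {S1 S2 : Type} [Fintype S1] [Fintype S2]

open scoped Classical in
noncomputable def suppF (a : S1 → ℝ) : Finset S1 := univ.filter (fun s => 0 < a s)

lemma mem_suppF {a : S1 → ℝ} {s : S1} : s ∈ suppF a ↔ 0 < a s := by simp [suppF]

open scoped Classical in
noncomputable def RimgF (R : Set (S1 × S2)) (T : Finset S1) : Finset S2 :=
  univ.filter (fun s2 => ∃ s1 ∈ T, (s1, s2) ∈ R)

lemma mem_RimgF {R : Set (S1 × S2)} {T : Finset S1} {s2 : S2} :
    s2 ∈ RimgF R T ↔ ∃ s1 ∈ T, (s1, s2) ∈ R := by simp [RimgF]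

lemma RimgF_mono {R : Set (S1 × S2)} {T T' : Finset S1} (h : T ⊆ T') :
    RimgF R T ⊆ RimgF R T' := by
  intro x hx
  rw [mem_RimgF] at hx ⊢
  obtain ⟨s1, hs1, hR⟩ := hx
  exact ⟨s1, h hs1, hR⟩

lemma RimgF_union {R : Set (S1 × S2)} (T T' : Finset S1) :
    RimgF R (T ∪ T') = RimgF R T ∪ RimgF R T' := by
  ext x; simp [mem_RimgF, or_and_right, exists_or]

lemma RimgF_inter_subset {R : Set (S1 × S2)} (T T' : Finset S1) :
    RimgF R (T ∩ T') ⊆ RimgF R T ∩ RimgF R T' := by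
  intro x hx
  simp only [mem_inter]
  exact ⟨RimgF_mono inter_subset_left hx, RimgF_mono inter_subset_right hx⟩

lemma RimgF_empty {R : Set (S1 × S2)} : RimgF R (∅ : Finset S1) = ∅ := by
  ext x; simp [mem_RimgF]

/-- The Hall condition, finset form. -/
def HallF (R : Set (S1 × S2)) (a : S1 → ℝ) (b : S2 → ℝ) : Prop :=
  ∀ T : Finset S1, T ⊆ suppF a → ∑ s ∈ T, a s ≤ ∑ s2 ∈ RimgF R T, b s2

/-- Existence of a coupling-like weight: rows sum to `a`, columns at most `b`. -/
def ConclF (R : Set (S1 × S2)) (a : S1 → ℝ) (b : S2 → ℝ) : Prop :=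
  ∃ w : S1 → S2 → ℝ, (∀ p q, 0 ≤ w p q) ∧ (∀ s1, ∑ s2, w s1 s2 = a s1) ∧
    (∀ s2, ∑ s1, w s1 s2 ≤ b s2) ∧ (∀ p q, 0 < w p q → (p, q) ∈ R)

def TightF (R : Set (S1 × S2)) (a : S1 → ℝ) (b : S2 → ℝ) (T : Finset S1) : Prop :=
  ∑ s ∈ T, a s = ∑ s2 ∈ RimgF R T, b s2

lemma tight_union {R : Set (S1 × S2)} {a : S1 → ℝ} {b : S2 → ℝ}
    (hb : ∀ s, 0 ≤ b s) (hH : HallF R a b) {T T' : Finset S1}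
    (hT : T ⊆ suppF a) (hT' : T' ⊆ suppF a)
    (ht : TightF R a b T) (ht' : TightF R a b T') : TightF R a b (T ∪ T') := by
  unfold TightF at ht ht' ⊢
  have h1 : ∑ s ∈ T ∪ T', a s ≤ ∑ s2 ∈ RimgF R (T ∪ T'), b s2 :=
    hH _ (union_subset hT hT')
  have h2 : ∑ s2 ∈ RimgF R (T ∪ T'), b s2 ≤ ∑ s ∈ T ∪ T', a s := by
    have hinter : ∑ s ∈ T ∩ T', a s ≤ ∑ s2 ∈ RimgF R (T ∩ T'), b s2 :=
      hH _ (subset_trans inter_subset_left hT)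
    have hinc : ∑ s2 ∈ RimgF R (T ∩ T'), b s2 ≤ ∑ s2 ∈ RimgF R T ∩ RimgF R T', b s2 :=
      Finset.sum_le_sum_of_subset_of_nonneg (RimgF_inter_subset T T')
        (fun i _ _ => hb i)
    have hie1 : ∑ s2 ∈ RimgF R T ∪ RimgF R T', b s2 + ∑ s2 ∈ RimgF R T ∩ RimgF R T', b s2
        = ∑ s2 ∈ RimgF R T, b s2 + ∑ s2 ∈ RimgF R T', b s2 :=
      Finset.sum_union_inter
    have hie2 : ∑ s ∈ T ∪ T', a s + ∑ s ∈ T ∩ T', a s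
        = ∑ s ∈ T, a s + ∑ s ∈ T', a s :=
      Finset.sum_union_inter
    rw [RimgF_union]
    linarith [ht, ht']
  exact le_antisymm h1 h2



open scoped Classical in
noncomputable def Tstar (R : Set (S1 × S2)) (a : S1 → ℝ) (b : S2 → ℝ) (s1 : S1) : Finset S1 :=
  (((suppF a).erase s1).powerset.filter (fun T => TightF R a b T)).sup id

lemma Tstar_subset {R : Set (S1 × S2)} {a : S1 → ℝ} {b : S2 → ℝ} {s1 : S1} :
    Tstar R a b s1 ⊆ (suppF a).erase s1 := by
  have h : Tstar R a b s1 ≤ (suppF a).erase s1 := by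
    apply Finset.sup_le
    intro T hT
    simp only [Finset.mem_filter, Finset.mem_powerset] at hT
    exact hT.1
  exact h

lemma subset_Tstar {R : Set (S1 × S2)} {a : S1 → ℝ} {b : S2 → ℝ} {s1 : S1} {T : Finset S1}
    (hT : T ⊆ (suppF a).erase s1) (ht : TightF R a b T) : T ⊆ Tstar R a b s1 := by
  have h : id T ≤ Tstar R a b s1 :=
    Finset.le_sup (f := id) (by simp only [Finset.mem_filter, Finset.mem_powerset]; exact ⟨hT, ht⟩)
  exact h

lemma tight_empty {R : Set (S1 × S2)} {a : S1 → ℝ} {b : S2 → ℝ} :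
    TightF R a b (∅ : Finset S1) := by
  simp [TightF, RimgF_empty]

lemma tight_Tstar {R : Set (S1 × S2)} {a : S1 → ℝ} {b : S2 → ℝ} {s1 : S1}
    (hb : ∀ s, 0 ≤ b s) (hH : HallF R a b) : TightF R a b (Tstar R a b s1) := by
  have herase : ((suppF a).erase s1) ⊆ suppF a := Finset.erase_subset _ _
  have key : ∀ F : Finset (Finset S1),
      (∀ T ∈ F, T ⊆ (suppF a).erase s1 ∧ TightF R a b T) →
      F.sup id ⊆ (suppF a).erase s1 ∧ TightF R a b (F.sup id) := by
    intro F
    induction F using Finset.induction_on with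
    | empty =>
      intro _
      rw [Finset.sup_empty, Finset.bot_eq_empty]
      exact ⟨Finset.empty_subset _, tight_empty⟩
    | @insert T F' hx ih =>
      intro h
      have h1 := h T (Finset.mem_insert_self _ _)
      have h2 := ih (fun T' hT' => h T' (Finset.mem_insert_of_mem hT'))
      rw [Finset.sup_insert]
      constructor
      · exact Finset.union_subset h1.1 h2.1
      · exact tight_union hb hH (h1.1.trans herase) (h2.1.trans herase) h1.2 h2.2
  have := key (((suppF a).erase s1).powerset.filter (fun T => TightF R a b T)) ?_
  · exact this.2
  · intro T hT
    simp only [Finset.mem_filter, Finset.mem_powerset] at hT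
    exact hT



lemma sum_sub_ite (T : Finset S1) (a : S1 → ℝ) (s1 : S1) (ε : ℝ) :
    ∑ s ∈ T, (a s - if s = s1 then ε else 0)
      = ∑ s ∈ T, a s - (if s1 ∈ T then ε else 0) := by
  rw [Finset.sum_sub_distrib, Finset.sum_ite_eq' T s1 (fun _ => ε)]

lemma ConclF.step {R : Set (S1 × S2)} {a : S1 → ℝ} {b : S2 → ℝ} (s1 : S1) (s2 : S2)
    (hR : (s1, s2) ∈ R) (ε : ℝ) (hε : 0 ≤ ε)
    (h : ConclF R (fun s => a s - if s = s1 then ε else 0)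
                  (fun t => b t - if t = s2 then ε else 0)) :
    ConclF R a b := by
  obtain ⟨w, hw0, hrow, hcol, hsupp⟩ := h
  refine ⟨fun p q => w p q + (if p = s1 ∧ q = s2 then ε else 0), ?_, ?_, ?_, ?_⟩
  · intro p q
    have := hw0 p q
    dsimp only
    split <;> linarith
  · intro s
    rw [Finset.sum_add_distrib, hrow]
    have he : ∑ q, (if s = s1 ∧ q = s2 then ε else 0) = if s = s1 then ε else 0 := by
      by_cases hs : s = s1 <;> simp [hs, Finset.sum_ite_eq' Finset.univ s2 (fun _ => ε)]
    rw [he]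
    ring
  · intro t
    rw [Finset.sum_add_distrib]
    have hc := hcol t
    simp only at hc
    have he : ∑ p, (if p = s1 ∧ t = s2 then ε else 0) = if t = s2 then ε else 0 := by
      by_cases ht : t = s2 <;> simp [ht, Finset.sum_ite_eq' Finset.univ s1 (fun _ => ε)]
    rw [he]
    split <;> split at hc <;> linarith
  · intro p q hpq
    dsimp only at hpq
    by_cases h1 : 0 < w p q
    · exact hsupp p q h1
    · have h2 := hw0 p q
      have h3 : (0:ℝ) < (if p = s1 ∧ q = s2 then ε else 0) := by linarith
      by_cases h4 : p = s1 ∧ q = s2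
      · rw [h4.1, h4.2]; exact hR
      · rw [if_neg h4] at h3; linarith

lemma exists_good_s2 {R : Set (S1 × S2)} {a : S1 → ℝ} {b : S2 → ℝ}
    (hb : ∀ s, 0 ≤ b s) (hH : HallF R a b) {s1 : S1} (hs1 : 0 < a s1) :
    ∃ s2, (s1, s2) ∈ R ∧ s2 ∉ RimgF R (Tstar R a b s1) ∧ 0 < b s2 := by
  set Tst := Tstar R a b s1 with hTst
  have htight : TightF R a b Tst := tight_Tstar hb hH
  have hsub : Tst ⊆ (suppF a).erase s1 := Tstar_subset
  have hsub' : insert s1 Tst ⊆ suppF a := by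
    intro x hx
    rcases Finset.mem_insert.mp hx with rfl | hx
    · exact mem_suppF.mpr hs1
    · exact (Finset.erase_subset _ _) (hsub hx)
  have hH1 := hH _ hsub'
  have hs1notin : s1 ∉ Tst := fun h => (Finset.mem_erase.mp (hsub h)).1 rfl
  rw [Finset.sum_insert hs1notin] at hH1
  have himg : RimgF R (insert s1 Tst) = RimgF R Tst ∪ (RimgF R {s1} \ RimgF R Tst) := by
    rw [Finset.union_sdiff_self_eq_union]
    have : insert s1 Tst = {s1} ∪ Tst := by
      ext x; simp [Finset.mem_insert, Finset.mem_union, or_comm]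
    rw [this, RimgF_union]
    exact Finset.union_comm _ _
  rw [himg, Finset.sum_union Finset.disjoint_sdiff] at hH1
  unfold TightF at htight
  have hD : 0 < ∑ t ∈ RimgF R {s1} \ RimgF R Tst, b t := by linarith
  have : ∃ t ∈ RimgF R {s1} \ RimgF R Tst, 0 < b t := by
    by_contra hcon
    push_neg at hcon
    have : ∑ t ∈ RimgF R {s1} \ RimgF R Tst, b t ≤ 0 :=
      Finset.sum_nonpos fun t ht => hcon t ht
    linarith
  obtain ⟨s2, hmem, hbs2⟩ := this
  rw [Finset.mem_sdiff] at hmem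
  refine ⟨s2, ?_, hmem.2, hbs2⟩
  have := mem_RimgF.mp hmem.1
  simpa using this

lemma suppF_sub_subset {a : S1 → ℝ} {s1 : S1} {ε : ℝ} (hε : 0 ≤ ε) :
    suppF (fun s => a s - if s = s1 then ε else 0) ⊆ suppF a := by
  intro x hx
  rw [mem_suppF] at hx ⊢
  have h : a x - (if x = s1 then ε else 0) ≤ a x := by split <;> linarith
  linarith

lemma Hall_step {R : Set (S1 × S2)} {a : S1 → ℝ} {b : S2 → ℝ}
    (hH : HallF R a b) {s1 : S1} {s2 : S2} {ε : ℝ}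
    (hR : (s1, s2) ∈ R) (hε0 : 0 ≤ ε)
    (hεmargin : ∀ T : Finset S1, T ⊆ (suppF a).erase s1 → T.Nonempty →
      s2 ∈ RimgF R T → ε ≤ ∑ t ∈ RimgF R T, b t - ∑ s ∈ T, a s) :
    HallF R (fun s => a s - if s = s1 then ε else 0)
            (fun t => b t - if t = s2 then ε else 0) := by
  intro T hT
  have hTa : T ⊆ suppF a := hT.trans (suppF_sub_subset hε0)
  rw [sum_sub_ite T a s1 ε, sum_sub_ite (RimgF R T) b s2 ε]
  have hHT := hH T hTa
  by_cases h1 : s1 ∈ T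
  · have h2 : s2 ∈ RimgF R T := mem_RimgF.mpr ⟨s1, h1, hR⟩
    rw [if_pos h1, if_pos h2]
    linarith
  · rw [if_neg h1]
    by_cases h2 : s2 ∈ RimgF R T
    · have hne : T.Nonempty := by
        obtain ⟨x, hx, _⟩ := mem_RimgF.mp h2
        exact ⟨x, hx⟩
      have hsubT : T ⊆ (suppF a).erase s1 := fun x hx =>
        Finset.mem_erase.mpr ⟨fun h => h1 (h ▸ hx), hTa hx⟩
      have := hεmargin T hsubT hne h2
      rw [if_pos h2]
      linarith
    · rw [if_neg h2]
      linarith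

lemma inner_step (R : Set (S1 × S2)) (K : ℕ)
    (outIH : ∀ a b : _, (∀ s : S1, 0 ≤ a s) → (∀ s : S2, 0 ≤ b s) → HallF R a b →
      (suppF a).card < K → ConclF R a b) :
    ∀ n : ℕ, ∀ (a : S1 → ℝ) (b : S2 → ℝ), (∀ s, 0 ≤ a s) → (∀ s, 0 ≤ b s) → HallF R a b →
      (suppF a).card = K → ∀ s1, 0 < a s1 →
      (suppF b).card + (univ \ RimgF R (Tstar R a b s1)).card ≤ n →
      ConclF R a b := by
  intro n
  induction n with
  | zero =>
    intro a b ha hb hH hK s1 hs1 hm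
    exfalso
    have hbcard : (suppF b).card = 0 := by omega
    have hbz : ∀ t, b t = 0 := by
      intro t
      by_contra hbt
      have : t ∈ suppF b := mem_suppF.mpr (lt_of_le_of_ne (hb t) (Ne.symm hbt))
      have := Finset.card_pos.mpr ⟨t, this⟩
      omega
    have h1 : ({s1} : Finset S1) ⊆ suppF a := by
      intro x hx
      rw [Finset.mem_singleton] at hx
      exact hx ▸ mem_suppF.mpr hs1
    have := hH {s1} h1
    rw [Finset.sum_singleton] at this
    have : ∑ t ∈ RimgF R {s1}, b t = 0 := Finset.sum_eq_zero fun t _ => hbz t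
    linarith [hH {s1} h1, Finset.sum_singleton (fun s => a s) s1]
  | succ n ih =>
    intro a b ha hb hH hK s1 hs1 hm
    obtain ⟨s2, hR, hs2T, hbs2⟩ := exists_good_s2 hb hH hs1
    classical
    set fam := ((suppF a).erase s1).powerset.filter
      (fun T => T.Nonempty ∧ s2 ∈ RimgF R T) with hfam
    set cand := insert (a s1) (insert (b s2)
      (fam.image (fun T => ∑ t ∈ RimgF R T, b t - ∑ s ∈ T, a s))) with hcand
    have hne : cand.Nonempty := ⟨a s1, by simp [hcand]⟩
    set ε := cand.min' hne with hεdef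
    have hεa : ε ≤ a s1 := Finset.min'_le _ _ (by simp [hcand])
    have hεb : ε ≤ b s2 := Finset.min'_le _ _ (by simp [hcand])
    have hεmargin : ∀ T : Finset S1, T ⊆ (suppF a).erase s1 → T.Nonempty →
        s2 ∈ RimgF R T → ε ≤ ∑ t ∈ RimgF R T, b t - ∑ s ∈ T, a s := by
      intro T h1 h2 h3
      apply Finset.min'_le
      simp only [hcand, Finset.mem_insert, Finset.mem_image]
      right; right
      exact ⟨T, by simp [hfam, Finset.mem_filter, Finset.mem_powerset, h1, h2, h3], rfl⟩
    have hnotight : ∀ T : Finset S1, T ⊆ (suppF a).erase s1 →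
        s2 ∈ RimgF R T → ¬ TightF R a b T := by
      intro T h1 h2 ht
      exact hs2T (RimgF_mono (subset_Tstar h1 ht) h2)
    have hε0 : 0 < ε := by
      rw [hεdef]
      apply (Finset.lt_min'_iff _ _).mpr
      intro x hx
      simp only [hcand, Finset.mem_insert, Finset.mem_image] at hx
      rcases hx with rfl | rfl | ⟨T, hT, rfl⟩
      · exact hs1
      · exact hbs2
      · simp only [hfam, Finset.mem_filter, Finset.mem_powerset] at hT
        obtain ⟨h1, _, h3⟩ := hT
        have hle := hH T (h1.trans (Finset.erase_subset _ _))
        have hne' : ∑ s ∈ T, a s ≠ ∑ t ∈ RimgF R T, b t := hnotight T h1 h3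
        have : ∑ s ∈ T, a s < ∑ t ∈ RimgF R T, b t := lt_of_le_of_ne hle hne'
        linarith
    set a' := fun s => a s - if s = s1 then ε else 0 with ha'def
    set b' := fun t => b t - if t = s2 then ε else 0 with hb'def
    have ha' : ∀ s, 0 ≤ a' s := by
      intro s
      rw [ha'def]
      dsimp only
      by_cases h : s = s1
      · rw [if_pos h, h]; linarith
      · rw [if_neg h]; simpa using ha s
    have hb' : ∀ t, 0 ≤ b' t := by
      intro t
      rw [hb'def]
      dsimp only
      by_cases h : t = s2
      · rw [if_pos h, h]; linarith
      · rw [if_neg h]; simpa using hb t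
    have hH' : HallF R a' b' := Hall_step hH hR hε0.le hεmargin
    have hconc' : ConclF R a' b' := by
      by_cases hca : ε = a s1
      · -- support shrinks; use outer IH
        have hsupp' : suppF a' = (suppF a).erase s1 := by
          ext x
          rw [mem_suppF, Finset.mem_erase, mem_suppF, ha'def]
          dsimp only
          by_cases h : x = s1
          · rw [if_pos h, h]
            constructor
            · intro hx; linarith
            · intro hx; exact absurd rfl hx.1
          · rw [if_neg h]
            constructor
            · intro hx; exact ⟨h, by linarith⟩
            · intro hx; linarith [hx.2]
        apply outIH a' b' ha' hb' hH'
        rw [hsupp', Finset.card_erase_of_mem (mem_suppF.mpr hs1), hK]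
        have : 0 < K := by
          rw [← hK]
          exact Finset.card_pos.mpr ⟨s1, mem_suppF.mpr hs1⟩
        omega
      · -- ε < a s1; support unchanged, inner measure decreases
        have hεlt : ε < a s1 := lt_of_le_of_ne hεa hca
        have hsupp' : suppF a' = suppF a := by
          ext x
          rw [mem_suppF, mem_suppF, ha'def]
          dsimp only
          by_cases h : x = s1
          · rw [if_pos h, h]
            constructor
            · intro hx; linarith
            · intro _; linarith
          · rw [if_neg h]
            constructor <;> (intro hx; linarith)
        have hs1' : 0 < a' s1 := by
          rw [ha'def]; dsimp only; rw [if_pos rfl]; linarith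
        have herase' : (suppF a').erase s1 = (suppF a).erase s1 := by rw [hsupp']
        -- old Tstar stays tight for the new pair
        have htight_old : TightF R a b (Tstar R a b s1) := tight_Tstar hb hH
        have hTsub : Tstar R a b s1 ⊆ (suppF a).erase s1 := Tstar_subset
        have hs1nT : s1 ∉ Tstar R a b s1 := fun h => (Finset.mem_erase.mp (hTsub h)).1 rfl
        have htight_new : TightF R a' b' (Tstar R a b s1) := by
          unfold TightF at htight_old ⊢
          rw [ha'def, hb'def]
          rw [sum_sub_ite _ a s1 ε, sum_sub_ite _ b s2 ε,
            if_neg hs1nT, if_neg hs2T]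
          linarith
        have hTstar_mono : Tstar R a b s1 ⊆ Tstar R a' b' s1 :=
          subset_Tstar (herase' ▸ hTsub) htight_new
        have hRmono : RimgF R (Tstar R a b s1) ⊆ RimgF R (Tstar R a' b' s1) :=
          RimgF_mono hTstar_mono
        have hsdiff : (univ \ RimgF R (Tstar R a' b' s1)) ⊆ (univ \ RimgF R (Tstar R a b s1)) :=
          Finset.sdiff_subset_sdiff (Finset.Subset.refl _) hRmono
        have hsuppb' : suppF b' ⊆ suppF b := suppF_sub_subset hε0.le
        -- measure strictly decreases
        have hmeas : (suppF b').card + (univ \ RimgF R (Tstar R a' b' s1)).card ≤ n := by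
          have hεmem : ε ∈ cand := Finset.min'_mem _ _
          simp only [hcand, Finset.mem_insert, Finset.mem_image] at hεmem
          rcases hεmem with h | h | ⟨T₀, hT₀, hT₀ε⟩
          · exact absurd h hca
          · -- ε = b s2 : s2 leaves supp b
            have hs2supp : s2 ∈ suppF b := mem_suppF.mpr hbs2
            have hs2supp' : s2 ∉ suppF b' := by
              rw [mem_suppF, hb'def]
              dsimp only
              rw [if_pos rfl, ← h]
              linarith
            have : (suppF b').card < (suppF b).card :=
              Finset.card_lt_card (Finset.ssubset_iff_of_subset hsuppb' |>.mpr
                ⟨s2, hs2supp, hs2supp'⟩)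
            have hc2 : (univ \ RimgF R (Tstar R a' b' s1)).card ≤
                (univ \ RimgF R (Tstar R a b s1)).card := Finset.card_le_card hsdiff
            omega
          · -- ε is the margin of T₀; T₀ becomes tight, so R(Tstar) grows
            simp only [hfam, Finset.mem_filter, Finset.mem_powerset] at hT₀
            obtain ⟨hT₀e, _, hT₀s2⟩ := hT₀
            have hs1nT₀ : s1 ∉ T₀ := fun h => (Finset.mem_erase.mp (hT₀e h)).1 rfl
            have htightT₀ : TightF R a' b' T₀ := by
              unfold TightF
              rw [ha'def, hb'def]
              rw [sum_sub_ite _ a s1 ε, sum_sub_ite _ b s2 ε,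
                if_neg hs1nT₀, if_pos hT₀s2]
              linarith [hT₀ε]
            have hT₀Tstar : T₀ ⊆ Tstar R a' b' s1 :=
              subset_Tstar (herase' ▸ hT₀e) htightT₀
            have hs2new : s2 ∈ RimgF R (Tstar R a' b' s1) :=
              RimgF_mono hT₀Tstar hT₀s2
            have hs2old : s2 ∈ univ \ RimgF R (Tstar R a b s1) :=
              Finset.mem_sdiff.mpr ⟨Finset.mem_univ _, hs2T⟩
            have hs2new' : s2 ∉ univ \ RimgF R (Tstar R a' b' s1) := by
              rw [Finset.mem_sdiff]
              exact fun h => h.2 hs2new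
            have : (univ \ RimgF R (Tstar R a' b' s1)).card <
                (univ \ RimgF R (Tstar R a b s1)).card :=
              Finset.card_lt_card (Finset.ssubset_iff_of_subset hsdiff |>.mpr
                ⟨s2, hs2old, hs2new'⟩)
            have hc2 : (suppF b').card ≤ (suppF b).card := Finset.card_le_card hsuppb'
            omega
        exact ih a' b' ha' hb' hH' (by rw [hsupp', hK]) s1 hs1' hmeas
    exact ConclF.step s1 s2 hR ε hε0.le hconc'

lemma existsW (R : Set (S1 × S2)) (a : S1 → ℝ) (b : S2 → ℝ)
    (ha : ∀ s, 0 ≤ a s) (hb : ∀ s, 0 ≤ b s) (hH : HallF R a b) : ConclF R a b := by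
  suffices h : ∀ K : ℕ, ∀ (a : S1 → ℝ) (b : S2 → ℝ), (∀ s, 0 ≤ a s) → (∀ s, 0 ≤ b s) →
      HallF R a b → (suppF a).card = K → ConclF R a b by
    exact h _ a b ha hb hH rfl
  intro K
  induction K using Nat.strong_induction_on with
  | _ K ihK =>
    intro a b ha hb hH hK
    by_cases hs : suppF a = ∅
    · refine ⟨fun _ _ => 0, fun _ _ => le_refl 0, ?_, fun s2 => by simpa using hb s2, ?_⟩
      · intro s
        have h1 : s ∉ suppF a := by rw [hs]; exact Finset.notMem_empty _
        rw [mem_suppF] at h1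
        have := ha s
        simp only [Finset.sum_const_zero]
        linarith
      · intro p q h
        exact absurd h (lt_irrefl 0)
    · obtain ⟨s1, hs1⟩ := Finset.nonempty_of_ne_empty hs
      exact inner_step R K
        (fun a' b' ha' hb' hH' hcard => ihK _ (hK ▸ hcard) a' b' ha' hb' hH' rfl)
        _ a b ha hb hH hK s1 (mem_suppF.mp hs1) le_rfl

end HallAux

end HallAuxSection

/-- Hall-type characterization of the weight-function lifting: a weight function
for `μ1`, `μ2`, `R` exists iff every subset of the support of `μ1` satisfies
`μ1(T) ≤ μ2(R(T))`. -/
theorem hasWeight_iff_hall {S1 S2 : Type} [Fintype S1] [Fintype S2]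
    (R : Set (S1 × S2)) (μ1 : FDist S1) (μ2 : FDist S2) :
    hasWeight R μ1 μ2 ↔ ∀ T ⊆ μ1.supp, μ1.prob T ≤ μ2.prob (relImage R T) := by
  constructor
  · rintro ⟨w, hw01, hrow, hcol, hsupp⟩ T _
    have h1 : μ1.prob T = ∑ s1, ∑ s2, (if s1 ∈ T then w (s1, s2) else 0) := by
      unfold FDist.prob
      apply Finset.sum_congr rfl
      intro s1 _
      by_cases h : s1 ∈ T <;> simp [h, hrow s1]
    have h2 : μ2.prob (relImage R T) = ∑ s1, ∑ s2, (if s2 ∈ relImage R T then w (s1, s2) else 0) := by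
      unfold FDist.prob
      rw [Finset.sum_comm]
      apply Finset.sum_congr rfl
      intro s2 _
      by_cases h : s2 ∈ relImage R T <;> simp [h, hcol s2]
    rw [h1, h2]
    apply Finset.sum_le_sum
    intro s1 _
    apply Finset.sum_le_sum
    intro s2 _
    by_cases ht : s1 ∈ T
    · by_cases him : s2 ∈ relImage R T
      · simp [ht, him]
      · rw [if_pos ht, if_neg him]
        by_cases hwp : 0 < w (s1, s2)
        · exact absurd ⟨s1, ht, hsupp _ hwp⟩ him
        · linarith [(hw01 (s1, s2)).1]
    · rw [if_neg ht]
      split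
      · exact (hw01 (s1, s2)).1
      · exact le_refl 0
  · intro hHall
    have hH : HallAux.HallF R μ1.pmf μ2.pmf := by
      intro T hT
      have hsub : (↑T : Set S1) ⊆ μ1.supp := by
        intro x hx
        exact HallAux.mem_suppF.mp (hT hx)
      have h := hHall ↑T hsub
      have e1 : μ1.prob ↑T = ∑ s ∈ T, μ1.pmf s := by
        unfold FDist.prob
        refine Eq.trans (Finset.sum_congr rfl fun s _ => ?_)
          (by rw [Finset.sum_ite_mem, Finset.univ_inter])
        by_cases h : s ∈ T
        · rw [if_pos (Finset.mem_coe.mpr h), if_pos h]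
        · rw [if_neg (fun hc => h (Finset.mem_coe.mp hc)), if_neg h]
      have e2 : μ2.prob (relImage R ↑T) = ∑ t ∈ HallAux.RimgF R T, μ2.pmf t := by
        unfold FDist.prob
        refine Eq.trans (Finset.sum_congr rfl fun t _ => ?_)
          (by rw [Finset.sum_ite_mem, Finset.univ_inter])
        have hiff : t ∈ relImage R (↑T : Set S1) ↔ t ∈ HallAux.RimgF R T := by
          simp [relImage, HallAux.mem_RimgF]
        by_cases h : t ∈ HallAux.RimgF R T
        · rw [if_pos (hiff.mpr h), if_pos h]
        · rw [if_neg (fun hc => h (hiff.mp hc)), if_neg h]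
      rw [e1, e2] at h
      exact h
    obtain ⟨w, hw0, hrow, hcol, hsupp⟩ :=
      HallAux.existsW R μ1.pmf μ2.pmf μ1.nonneg μ2.nonneg hH
    have htot : ∑ s1, ∑ s2, w s1 s2 = 1 := by
      rw [Finset.sum_congr rfl (fun s1 _ => hrow s1)]
      exact μ1.sum_one
    have hzero : ∑ s2, (μ2.pmf s2 - ∑ s1, w s1 s2) = 0 := by
      rw [Finset.sum_sub_distrib, μ2.sum_one, Finset.sum_comm, htot]
      ring
    have hcol_eq : ∀ s2, μ2.pmf s2 = ∑ s1, w s1 s2 := by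
      intro s2
      have hnn : ∀ t ∈ Finset.univ, 0 ≤ μ2.pmf t - ∑ s1, w s1 t :=
        fun t _ => by linarith [hcol t]
      have := (Finset.sum_eq_zero_iff_of_nonneg hnn).mp hzero s2 (Finset.mem_univ _)
      linarith
    have hpmf1_le : ∀ s, μ1.pmf s ≤ 1 := by
      intro s
      rw [← μ1.sum_one]
      exact Finset.single_le_sum (fun t _ => μ1.nonneg t) (Finset.mem_univ s)
    refine ⟨fun p => w p.1 p.2, ?_, ?_, ?_, ?_⟩
    · intro p
      refine ⟨hw0 p.1 p.2, ?_⟩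
      have h1 : w p.1 p.2 ≤ ∑ s2, w p.1 s2 :=
        Finset.single_le_sum (fun t _ => hw0 p.1 t) (Finset.mem_univ p.2)
      rw [hrow p.1] at h1
      exact h1.trans (hpmf1_le p.1)
    · intro s1
      exact (hrow s1).symm
    · intro s2
      exact hcol_eq s2
    · intro p hp
      have := hsupp p.1 p.2 hp
      simpa using this
end

section
/- Strong simulation is compositional: if L1 ≼ L2 with α2 ⊆ α1, then for every LPTS L, L1 ∥ L ≼ L2 ∥ L; moreover if R12 is a strong simulation witnessing L1 ≼ L2, then R = {((s1,s),(s2,s)) | s1 R12 s2, s ∈ S_L} is a strong simulation between L1 ∥ L and L2 ∥ L. -/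
open Classical

/-- Parallel composition of LPTSes (Segala–Lynch). -/
noncomputable def par {S1 S2 Act : Type} [Fintype S1] [Fintype S2]
    (L1 : LPTS S1 Act) (L2 : LPTS S2 Act) : LPTS (S1 × S2) Act where
  start := (L1.start, L2.start)
  alpha := L1.alpha ∪ L2.alpha
  trans p a := {μ |
    (∃ μ1 ∈ L1.trans p.1 a, ∃ μ2 ∈ L2.trans p.2 a, μ = μ1.prod μ2) ∨
    (∃ μ1 ∈ L1.trans p.1 a, a ∉ L2.alpha ∧ μ = μ1.prod (FDist.dirac p.2)) ∨
    (a ∉ L1.alpha ∧ ∃ μ2 ∈ L2.trans p.2 a, μ = (FDist.dirac p.1).prod μ2)}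
  trans_mem := by
    rintro p a μ (⟨μ1, h1, -⟩ | ⟨μ1, h1, -⟩ | ⟨-, μ2, h2, -⟩)
    · exact Or.inl (L1.trans_mem _ _ _ h1)
    · exact Or.inl (L1.trans_mem _ _ _ h1)
    · exact Or.inr (L2.trans_mem _ _ _ h2)
  finite_trans := by
    intro p a
    apply Set.Finite.subset (Set.Finite.union (Set.Finite.union
      (Set.Finite.image (fun q : FDist S1 × FDist S2 => q.1.prod q.2)
        (Set.Finite.prod (L1.finite_trans p.1 a) (L2.finite_trans p.2 a)))
      (Set.Finite.image (fun μ1 => μ1.prod (FDist.dirac p.2)) (L1.finite_trans p.1 a)))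
      (Set.Finite.image (fun μ2 => (FDist.dirac p.1).prod μ2) (L2.finite_trans p.2 a)))
    rintro μ (⟨μ1, h1, μ2, h2, rfl⟩ | ⟨μ1, h1, -, rfl⟩ | ⟨-, μ2, h2, rfl⟩)
    · exact Or.inl (Or.inl ⟨(μ1, μ2), Set.mk_mem_prod h1 h2, rfl⟩)
    · exact Or.inl (Or.inr ⟨μ1, h1, rfl⟩)
    · exact Or.inr ⟨μ2, h2, rfl⟩

lemma prob_nonneg {S : Type} [Fintype S] (μ : FDist S) (T : Set S) : 0 ≤ μ.prob T := by
  apply Finset.sum_nonneg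
  intro s _
  split <;> [exact μ.nonneg s; exact le_rfl]

lemma prob_mono {S : Type} [Fintype S] (μ : FDist S) {T T' : Set S} (h : T ⊆ T') :
    μ.prob T ≤ μ.prob T' := by
  apply Finset.sum_le_sum
  intro s _
  by_cases hs : s ∈ T
  · simp [hs, h hs]
  · simp only [hs, if_false]
    split <;> [exact μ.nonneg s; exact le_rfl]

lemma dirac_lift {S1 S2 : Type} [Fintype S1] [Fintype S2] (R : Set (S1 × S2))
    {s1 : S1} {s2 : S2} (h : (s1, s2) ∈ R) :
    liftRel R (FDist.dirac s1) (FDist.dirac s2) := by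
  have dprob : ∀ {S : Type} [Fintype S] (s : S) (T : Set S),
      (FDist.dirac s).prob T = if s ∈ T then 1 else 0 := by
    intro S _ s T
    rw [FDist.prob]
    rw [show (fun t => if t ∈ T then (FDist.dirac s).pmf t else 0)
        = fun t => if t = s then (if s ∈ T then 1 else 0) else 0 from ?_]
    · simp
    · funext t
      simp only [FDist.dirac]
      by_cases ht : t = s <;> by_cases hT : t ∈ T <;> subst_eqs <;> simp_all
  intro T hT
  rw [dprob, dprob]
  by_cases h1 : s1 ∈ T
  · simp [h1, show s2 ∈ relImage R T from ⟨s1, h1, h⟩]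
  · simp only [h1, if_false]
    split <;> norm_num

lemma prod_prob {S1 S2 : Type} [Fintype S1] [Fintype S2] (μ : FDist S1) (ν : FDist S2)
    (T : Set (S1 × S2)) :
    (μ.prod ν).prob T = ∑ t, ν.pmf t * μ.prob {s | (s, t) ∈ T} := by
  rw [FDist.prob, Fintype.sum_prod_type_right]
  refine Finset.sum_congr rfl fun t _ => ?_
  rw [FDist.prob, Finset.mul_sum]
  refine Finset.sum_congr rfl fun s _ => ?_
  simp only [FDist.prod, Set.mem_setOf_eq]
  split <;> ring

lemma liftRel_prod {S1 S2 SL : Type} [Fintype S1] [Fintype S2] [Fintype SL]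
    (R12 : Set (S1 × S2)) (μ1 : FDist S1) (μ2 : FDist S2) (ν : FDist SL)
    (h : liftRel R12 μ1 μ2) :
    liftRel {p : (S1 × SL) × (S2 × SL) | (p.1.1, p.2.1) ∈ R12 ∧ p.1.2 = p.2.2}
      (μ1.prod ν) (μ2.prod ν) := by
  intro T hT
  rw [prod_prob, prod_prob]
  apply Finset.sum_le_sum
  intro t _
  by_cases hν : 0 < ν.pmf t
  · apply mul_le_mul_of_nonneg_left ?_ (ν.nonneg t)
    have hsub : {s : S1 | (s, t) ∈ T} ⊆ μ1.supp := by
      intro s hs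
      have hp := hT hs
      have : 0 < μ1.pmf s * ν.pmf t := hp
      have h1 := μ1.nonneg s
      show 0 < μ1.pmf s
      nlinarith
    refine le_trans (h _ hsub) (prob_mono _ ?_)
    rintro s2 ⟨s1, hs1, hR⟩
    exact ⟨(s1, t), hs1, hR, rfl⟩
  · have h0 : ν.pmf t = 0 := le_antisymm (not_lt.1 hν) (ν.nonneg t)
    simp [h0]

/-- Strong simulation is compositional: if `L1 ≼ L2` with `α2 ⊆ α1`, then
`L1 ∥ L ≼ L2 ∥ L`; moreover the lifted relation pairing equal `L`-components is
a strong simulation between the compositions. -/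
theorem sim_compositional {S1 S2 SL Act : Type} [Fintype S1] [Fintype S2] [Fintype SL]
    (L1 : LPTS S1 Act) (L2 : LPTS S2 Act) (L : LPTS SL Act)
    (halpha : L2.alpha ⊆ L1.alpha) :
    (Sim L1 L2 → Sim (par L1 L) (par L2 L)) ∧
    ∀ R12 : Set (S1 × S2), StrongSim L1 L2 R12 →
      StrongSim (par L1 L) (par L2 L)
        {p : (S1 × SL) × (S2 × SL) | (p.1.1, p.2.1) ∈ R12 ∧ p.1.2 = p.2.2} := by
  have key : ∀ R12 : Set (S1 × S2), StrongSim L1 L2 R12 →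
      StrongSim (par L1 L) (par L2 L)
        {p : (S1 × SL) × (S2 × SL) | (p.1.1, p.2.1) ∈ R12 ∧ p.1.2 = p.2.2} := by
    intro R12 hsim
    rintro ⟨s1, s⟩ ⟨s2, s'⟩ ⟨hR, (heq : s = s')⟩ a μ hμ
    subst heq
    rcases hμ with ⟨μ1, h1, ν, hν, rfl⟩ | ⟨μ1, h1, hna, rfl⟩ | ⟨hna, ν, hν, rfl⟩
    · obtain ⟨μ2, h2, hlift⟩ := hsim s1 s2 hR a μ1 h1
      exact ⟨μ2.prod ν, Or.inl ⟨μ2, h2, ν, hν, rfl⟩, liftRel_prod _ _ _ _ hlift⟩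
    · obtain ⟨μ2, h2, hlift⟩ := hsim s1 s2 hR a μ1 h1
      exact ⟨μ2.prod (FDist.dirac s), Or.inr (Or.inl ⟨μ2, h2, hna, rfl⟩),
        liftRel_prod _ _ _ _ hlift⟩
    · have hna2 : a ∉ L2.alpha := fun h => hna (halpha h)
      exact ⟨(FDist.dirac s2).prod ν, Or.inr (Or.inr ⟨hna2, ν, hν, rfl⟩),
        liftRel_prod _ _ _ _ (dirac_lift R12 hR)⟩
  refine ⟨?_, key⟩
  rintro ⟨R12, hsim, hstart⟩
  exact ⟨_, key R12 hsim, ⟨hstart, rfl⟩⟩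
end

section
/- If L1 ⋠ L2, then there exists an LPTS C that is a counterexample: C ≼ L1 and C ⋠ L2. Moreover C can be chosen to be a stochastic tree (its start state is not in the support of any transition distribution and every other state is in the support of exactly one transition distribution). -/
open Classical

/-- A stochastic tree: the start state is not in the support of any transition
distribution, and every other state is in the support of exactly one transition
distribution. -/
def IsTree {S Act : Type} [Fintype S] (L : LPTS S Act) : Prop :=
  (∀ s a μ, μ ∈ L.trans s a → L.start ∉ μ.supp) ∧
  ∀ t : S, t ≠ L.start →
    ∃! tr : S × Act × FDist S, tr.2.2 ∈ L.trans tr.1 tr.2.1 ∧ t ∈ tr.2.2.supp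


namespace FDist

variable {S S1 S2 : Type} [Fintype S] [Fintype S1] [Fintype S2]

@[ext] theorem ext' {μ ν : FDist S} (h : ∀ s, μ.pmf s = ν.pmf s) : μ = ν := by
  cases μ; cases ν; simp only [mk.injEq]; funext s; exact h s

theorem prob_mono (μ : FDist S) {T U : Set S} (h : T ⊆ U) : μ.prob T ≤ μ.prob U := by
  apply Finset.sum_le_sum
  intro s _
  by_cases hs : s ∈ T
  · simp [hs, h hs]
  · simp only [hs, if_false]
    split
    · exact μ.nonneg s
    · exact le_rfl

theorem mem_supp_iff (μ : FDist S) (s : S) : s ∈ μ.supp ↔ μ.pmf s ≠ 0 := by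
  constructor
  · intro h; exact ne_of_gt h
  · intro h; exact lt_of_le_of_ne (μ.nonneg s) (Ne.symm h)

/-- Pushforward of a distribution along a map. -/
noncomputable def map (μ : FDist S1) (g : S1 → S2) : FDist S2 where
  pmf t := ∑ s, if g s = t then μ.pmf s else 0
  nonneg t := Finset.sum_nonneg fun s _ => by
    split
    · exact μ.nonneg s
    · exact le_rfl
  sum_one := by
    rw [Finset.sum_comm]
    have : ∀ s : S1, ∑ t : S2, (if g s = t then μ.pmf s else 0) = μ.pmf s := by
      intro s; simp
    simp_rw [this]; exact μ.sum_one

theorem map_pmf (μ : FDist S1) (g : S1 → S2) (t : S2) :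
    (μ.map g).pmf t = ∑ s, if g s = t then μ.pmf s else 0 := rfl

theorem prob_map (μ : FDist S1) (g : S1 → S2) (T : Set S2) :
    (μ.map g).prob T = μ.prob (g ⁻¹' T) := by
  rw [prob, prob]
  have h1 : ∀ t : S2, (if t ∈ T then (μ.map g).pmf t else 0)
      = ∑ s, if g s = t ∧ t ∈ T then μ.pmf s else 0 := by
    intro t
    by_cases ht : t ∈ T
    · rw [if_pos ht, map_pmf]
      exact Finset.sum_congr rfl fun s _ => by simp [ht]
    · rw [if_neg ht]
      symm; apply Finset.sum_eq_zero; intro s _; simp [ht]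
  simp_rw [h1]
  rw [Finset.sum_comm]
  apply Finset.sum_congr rfl
  intro s _
  rw [Finset.sum_eq_single (g s)]
  · simp [Set.mem_preimage]
  · intro t _ hts
    have : g s ≠ t := fun h => hts h.symm
    simp [this]
  · simp

theorem pmf_map_apply (μ : FDist S1) {g : S1 → S2} (hg : Function.Injective g) (s : S1) :
    (μ.map g).pmf (g s) = μ.pmf s := by
  rw [map_pmf]
  rw [Finset.sum_eq_single s]
  · simp
  · intro b _ hb
    have : g b ≠ g s := fun h => hb (hg h)
    simp [this]
  · simp

theorem pmf_map_of_not_range (μ : FDist S1) (g : S1 → S2) {t : S2}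
    (ht : t ∉ Set.range g) : (μ.map g).pmf t = 0 := by
  rw [map_pmf]
  apply Finset.sum_eq_zero
  intro s _
  have : g s ≠ t := fun h => ht ⟨s, h⟩
  simp [this]

theorem supp_map (μ : FDist S1) {g : S1 → S2} (hg : Function.Injective g) :
    (μ.map g).supp = g '' μ.supp := by
  ext t
  constructor
  · intro ht
    by_cases hr : t ∈ Set.range g
    · obtain ⟨s, rfl⟩ := hr
      rw [supp, Set.mem_setOf_eq, pmf_map_apply μ hg] at ht
      exact ⟨s, ht, rfl⟩
    · rw [supp, Set.mem_setOf_eq, pmf_map_of_not_range μ g hr] at ht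
      exact absurd ht (lt_irrefl 0)
  · rintro ⟨s, hs, rfl⟩
    rw [supp, Set.mem_setOf_eq, pmf_map_apply μ hg]
    exact hs

/-- Pullback of a distribution along an injective map covering the support. -/
noncomputable def comap (μ : FDist S2) (g : S1 → S2) (hg : Function.Injective g)
    (hsupp : ∀ s, μ.pmf s ≠ 0 → s ∈ Set.range g) : FDist S1 where
  pmf t := μ.pmf (g t)
  nonneg t := μ.nonneg _
  sum_one := by
    show ∑ t : S1, μ.pmf (g t) = 1
    rw [← μ.sum_one]
    rw [← Finset.sum_image (f := μ.pmf) (g := g) (fun x _ y _ h => hg h)]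
    apply Finset.sum_subset (Finset.subset_univ _)
    intro x _ hx
    by_contra h0
    obtain ⟨s, hs⟩ := hsupp x h0
    exact hx (Finset.mem_image.mpr ⟨s, Finset.mem_univ s, hs⟩)

theorem comap_pmf (μ : FDist S2) (g : S1 → S2) (hg : Function.Injective g)
    (hsupp : ∀ s, μ.pmf s ≠ 0 → s ∈ Set.range g) (t : S1) :
    (μ.comap g hg hsupp).pmf t = μ.pmf (g t) := rfl

theorem prob_comap (μ : FDist S2) (g : S1 → S2) (hg : Function.Injective g)
    (hsupp : ∀ s, μ.pmf s ≠ 0 → s ∈ Set.range g) (T : Set S1) :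
    (μ.comap g hg hsupp).prob T = μ.prob (g '' T) := by
  rw [prob, prob]
  simp_rw [comap_pmf]
  have h1 : ∀ s : S1, (if s ∈ T then μ.pmf (g s) else 0)
      = (fun x => if x ∈ g '' T then μ.pmf x else 0) (g s) := by
    intro s
    by_cases hs : s ∈ T
    · simp only [hs, if_pos, Set.mem_image_of_mem g hs, if_true]
    · have : g s ∉ g '' T := by
        rintro ⟨x, hx, hgx⟩
        exact hs (hg hgx ▸ hx)
      simp [hs, this]
  simp_rw [h1]
  rw [← Finset.sum_image (f := fun x => if x ∈ g '' T then μ.pmf x else 0) (g := g)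
    (fun x _ y _ h => hg h)]
  apply Finset.sum_subset (Finset.subset_univ _)
  intro x _ hx
  have hxT : x ∉ g '' T := by
    rintro ⟨s, _, rfl⟩
    exact hx (Finset.mem_image.mpr ⟨s, Finset.mem_univ s, rfl⟩)
  simp [hxT]

/-- The distribution restricted to (the subtype of) its support. -/
noncomputable def toSupp (μ : FDist S) : FDist {s // s ∈ μ.supp} :=
  μ.comap Subtype.val Subtype.val_injective
    (fun s hs => ⟨⟨s, (μ.mem_supp_iff s).2 hs⟩, rfl⟩)

theorem prob_toSupp (μ : FDist S) (T : Set {s // s ∈ μ.supp}) :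
    μ.toSupp.prob T = μ.prob (Subtype.val '' T) :=
  prob_comap _ _ _ _ T

theorem supp_toSupp (μ : FDist S) : μ.toSupp.supp = Set.univ := by
  ext z
  simp only [Set.mem_univ, iff_true, supp, Set.mem_setOf_eq, toSupp, comap]
  exact iff_of_true z.2 (Set.mem_univ _)

end FDist

/- ### Relation lifting monotonicity and fixpoint iteration -/

theorem relImage_mono {S1 S2 : Type} {R R' : Set (S1 × S2)} (h : R ⊆ R') (T : Set S1) :
    relImage R T ⊆ relImage R' T := by
  rintro s2 ⟨s1, hs1, hR⟩
  exact ⟨s1, hs1, h hR⟩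

theorem liftRel_mono {S1 S2 : Type} [Fintype S1] [Fintype S2] {R R' : Set (S1 × S2)}
    (h : R ⊆ R') {μ1 : FDist S1} {μ2 : FDist S2} (hl : liftRel R μ1 μ2) :
    liftRel R' μ1 μ2 := fun T hT =>
  le_trans (hl T hT) (μ2.prob_mono (relImage_mono h T))

section Main

variable {S1 S2 Act : Type} [Fintype S1] [Fintype S2]
variable (L1 : LPTS S1 Act) (L2 : LPTS S2 Act)

/-- One step of the coarsest-simulation fixpoint computation. -/
def Fop (R : Set (S1 × S2)) : Set (S1 × S2) :=
  {p | ∀ a μ1, μ1 ∈ L1.trans p.1 a → ∃ μ2 ∈ L2.trans p.2 a, liftRel R μ1 μ2}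

theorem Fop_mono {R R' : Set (S1 × S2)} (h : R ⊆ R') :
    Fop L1 L2 R ⊆ Fop L1 L2 R' := by
  intro p hp a μ1 hμ1
  obtain ⟨μ2, hμ2, hl⟩ := hp a μ1 hμ1
  exact ⟨μ2, hμ2, liftRel_mono h hl⟩

/-- Iterates of the fixpoint computation, starting from the full relation. -/
def Rit (k : ℕ) : Set (S1 × S2) := (Fop L1 L2)^[k] Set.univ

theorem Rit_zero : Rit L1 L2 0 = Set.univ := rfl

theorem Rit_succ (k : ℕ) : Rit L1 L2 (k + 1) = Fop L1 L2 (Rit L1 L2 k) := by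
  unfold Rit
  rw [Function.iterate_succ_apply']

theorem Rit_antitone : ∀ k, Rit L1 L2 (k + 1) ⊆ Rit L1 L2 k := by
  intro k
  induction k with
  | zero => exact fun p _ => Set.mem_univ p
  | succ k ih =>
    rw [Rit_succ L1 L2 (k + 1)]
    calc Fop L1 L2 (Rit L1 L2 (k + 1)) ⊆ Fop L1 L2 (Rit L1 L2 k) := Fop_mono L1 L2 ih
    _ = Rit L1 L2 (k + 1) := (Rit_succ L1 L2 k).symm

/-- If the start pair is in every iterate, then `L1 ≼ L2`. -/
theorem sim_of_mem_all (hmem : ∀ k, (L1.start, L2.start) ∈ Rit L1 L2 k) : Sim L1 L2 := by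
  -- find a stabilization point
  have key : ∃ j, Rit L1 L2 (j + 1) = Rit L1 L2 j := by
    by_contra hne
    push_neg at hne
    have hss : ∀ k, Rit L1 L2 (k + 1) ⊂ Rit L1 L2 k := fun k =>
      ssubset_of_subset_of_ne (Rit_antitone L1 L2 k) (hne k)
    have hcard : ∀ k, (Rit L1 L2 k).ncard + k ≤ (Rit L1 L2 0).ncard := by
      intro k
      induction k with
      | zero => simp
      | succ k ih =>
        have := Set.ncard_lt_ncard (hss k) (Set.toFinite _)
        omega
    have := hcard ((Rit L1 L2 0).ncard + 1)
    omega
  obtain ⟨j, hj⟩ := key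
  refine ⟨Rit L1 L2 j, ?_, hmem j⟩
  intro s1 s2 hR a μ1 hμ1
  have : (s1, s2) ∈ Fop L1 L2 (Rit L1 L2 j) := by
    rw [← Rit_succ, hj]; exact hR
  exact this a μ1 hμ1

theorem exists_not_Rit (h : ¬ Sim L1 L2) : ∃ k, (L1.start, L2.start) ∉ Rit L1 L2 k := by
  by_contra hc
  push_neg at hc
  exact h (sim_of_mem_all L1 L2 hc)

/- ### Failure witnesses -/

/-- `s1` has a transition that `u` cannot match up to `R`. -/
def failP (R : Set (S1 × S2)) (s1 : S1) (u : S2) : Prop :=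
  ∃ a, ∃ μ1 ∈ L1.trans s1 a, ∀ μ2 ∈ L2.trans u a, ¬ liftRel R μ1 μ2

theorem failP_of_not_Fop {R : Set (S1 × S2)} {s1 : S1} {u : S2}
    (h : (s1, u) ∉ Fop L1 L2 R) : failP L1 L2 R s1 u := by
  unfold Fop at h
  simp only [Set.mem_setOf_eq, not_forall] at h
  obtain ⟨a, μ1, hμ1, hfail⟩ := h
  refine ⟨a, μ1, hμ1, ?_⟩
  intro μ2 hμ2 hl
  exact hfail ⟨μ2, hμ2, hl⟩

noncomputable def wA {R : Set (S1 × S2)} {s1 : S1} {u : S2} (h : failP L1 L2 R s1 u) : Act :=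
  h.choose

noncomputable def wM {R : Set (S1 × S2)} {s1 : S1} {u : S2} (h : failP L1 L2 R s1 u) :
    FDist S1 := h.choose_spec.choose

theorem wM_mem {R : Set (S1 × S2)} {s1 : S1} {u : S2} (h : failP L1 L2 R s1 u) :
    wM L1 L2 h ∈ L1.trans s1 (wA L1 L2 h) := h.choose_spec.choose_spec.1

theorem wM_fail {R : Set (S1 × S2)} {s1 : S1} {u : S2} (h : failP L1 L2 R s1 u) :
    ∀ μ2 ∈ L2.trans u (wA L1 L2 h), ¬ liftRel R (wM L1 L2 h) μ2 :=
  h.choose_spec.choose_spec.2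

/- ### The state space of the counterexample tree -/

/-- States: paths of bounded length, labelled by a simulating-state tag and an `L1` state. -/
def TT (S1 S2 : Type) : ℕ → Type
  | 0 => Unit
  | (k+1) => Unit ⊕ (S2 × S1 × TT S1 S2 k)

instance fintypeTT (S1 S2 : Type) [Fintype S1] [Fintype S2] : ∀ k, Fintype (TT S1 S2 k)
  | 0 => inferInstanceAs (Fintype Unit)
  | (k+1) =>
    letI := fintypeTT S1 S2 k
    inferInstanceAs (Fintype (Unit ⊕ (S2 × S1 × TT S1 S2 k)))

def rootT (S1 S2 : Type) : ∀ k, TT S1 S2 k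
  | 0 => ()
  | (_+1) => Sum.inl ()

/-- Projection of a tree state to the `L1` state it unfolds. -/
def projT {S1 S2 : Type} : ∀ k, S1 → TT S1 S2 k → S1
  | 0, s1, _ => s1
  | (_+1), s1, Sum.inl _ => s1
  | (k+1), _, Sum.inr (_, t', y) => projT k t' y

theorem projT_rootT {S1 S2 : Type} (k : ℕ) (s1 : S1) :
    projT k s1 (rootT S1 S2 k) = s1 := by cases k <;> rfl

/-- Valid (reachable) states of the counterexample tree. -/
def valid : ∀ k, S1 → TT S1 S2 k → Prop
  | 0, _, _ => True
  | (k+1), s1, x =>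
    match x with
    | Sum.inl _ => True
    | Sum.inr (u, t', y) =>
      ∃ h : failP L1 L2 (Rit L1 L2 k) s1 u, t' ∈ (wM L1 L2 h).supp ∧ valid k t' y

theorem valid_rootT : ∀ k s1, valid L1 L2 k s1 (rootT S1 S2 k) := by
  intro k s1; cases k <;> trivial

theorem valid_sub {k : ℕ} {s1 t' : S1} {u : S2} {y : TT S1 S2 k}
    (h : valid L1 L2 (k+1) s1 (Sum.inr (u, t', y))) : valid L1 L2 k t' y := by
  simp only [valid] at h
  obtain ⟨_, _, hy⟩ := h
  exact hy

variable {L1 L2} in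
theorem valid_inr {k : ℕ} {s1 t' : S1} {u : S2} {y : TT S1 S2 k}
    (hf : failP L1 L2 (Rit L1 L2 k) s1 u) (hs : t' ∈ (wM L1 L2 hf).supp)
    (hy : valid L1 L2 k t' y) : valid L1 L2 (k+1) s1 (Sum.inr (u, t', y)) := ⟨hf, hs, hy⟩

/-- The states of the counterexample tree: valid states. -/
def CSt (k : ℕ) (s1 : S1) : Type := Subtype (valid L1 L2 k s1)

noncomputable instance (k : ℕ) (s1 : S1) : Fintype (CSt L1 L2 k s1) :=
  @Subtype.fintype _ _ (fun _ => Classical.propDecidable _) _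

def rootCSt (k : ℕ) (s1 : S1) : CSt L1 L2 k s1 := ⟨rootT S1 S2 k, valid_rootT L1 L2 k s1⟩

section Emb

variable {L1 L2}
variable {k : ℕ} {s1 : S1} {u : S2} (hf : failP L1 L2 (Rit L1 L2 k) s1 u)

/-- Embedding of the children of the root into the tree. -/
def embTop (z : {s // s ∈ (wM L1 L2 hf).supp}) : CSt L1 L2 (k+1) s1 :=
  ⟨Sum.inr (u, z.val, rootT S1 S2 k), valid_inr hf z.prop (valid_rootT L1 L2 k z.val)⟩

theorem embTop_injective : Function.Injective (embTop hf) := by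
  intro z w h
  have h' := congrArg Subtype.val h
  simp only [embTop] at h'
  have h2 := Sum.inr.inj h'
  exact Subtype.ext (congrArg (fun p => p.2.1) h2)

variable {t' : S1} (hs : t' ∈ (wM L1 L2 hf).supp)

/-- Embedding of a subtree into the tree. -/
def embSub (y : CSt L1 L2 k t') : CSt L1 L2 (k+1) s1 :=
  ⟨Sum.inr (u, t', y.val), valid_inr hf hs y.prop⟩

theorem embSub_injective : Function.Injective (embSub hf hs) := by
  intro z w h
  have h' := congrArg Subtype.val h
  simp only [embSub] at h'
  have h2 := Sum.inr.inj h'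
  exact Subtype.ext (congrArg (fun p => p.2.2) h2)

/-- The root transition distribution: a copy of `wM hf` on the children of the root. -/
noncomputable def liftTop : FDist (CSt L1 L2 (k+1) s1) :=
  (wM L1 L2 hf).toSupp.map (embTop hf)

/-- Lifting a subtree transition distribution to the tree. -/
noncomputable def liftSub (ν0 : FDist (CSt L1 L2 k t')) : FDist (CSt L1 L2 (k+1) s1) :=
  ν0.map (embSub hf hs)

end Emb

/-- The transition relation of the counterexample tree. -/
noncomputable def Ctrans : ∀ k (s1 : S1), TT S1 S2 k → Act → Set (FDist (CSt L1 L2 k s1))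
  | 0, _, _, _ => ∅
  | (k+1), s1, Sum.inl _, a =>
    {ν | ∃ (u : S2) (hf : failP L1 L2 (Rit L1 L2 k) s1 u),
      a = wA L1 L2 hf ∧ ν = liftTop hf}
  | (k+1), s1, Sum.inr (u, t', y), a =>
    {ν | ∃ (hf : failP L1 L2 (Rit L1 L2 k) s1 u) (hs : t' ∈ (wM L1 L2 hf).supp),
      ∃ ν0 ∈ Ctrans k t' y a, ν = liftSub hf hs ν0}

theorem Ctrans_finite : ∀ k (s1 : S1) (x : TT S1 S2 k) (a : Act),
    (Ctrans L1 L2 k s1 x a).Finite := by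
  intro k
  induction k with
  | zero => intro s1 x a; exact Set.finite_empty
  | succ k ih =>
    intro s1 x a
    match x with
    | Sum.inl _ =>
      apply Set.Finite.subset (Set.finite_range
        (fun u : S2 => if hf : failP L1 L2 (Rit L1 L2 k) s1 u then liftTop hf
          else FDist.map (FDist.dirac s1) (fun _ => rootCSt L1 L2 (k+1) s1)))
      rintro ν ⟨u, hf, _, rfl⟩
      refine ⟨u, ?_⟩
      dsimp only
      rw [dif_pos hf]
    | Sum.inr (u, t', y) =>
      by_cases hf : failP L1 L2 (Rit L1 L2 k) s1 u
      · by_cases hs : t' ∈ (wM L1 L2 hf).supp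
        · apply Set.Finite.subset (Set.Finite.image (liftSub hf hs) (ih t' y a))
          rintro ν ⟨hf', hs', ν0, hν0, rfl⟩
          exact ⟨ν0, hν0, rfl⟩
        · apply Set.Finite.subset Set.finite_empty
          rintro ν ⟨hf', hs', _⟩
          exact absurd hs' hs
      · apply Set.Finite.subset Set.finite_empty
        rintro ν ⟨hf', _⟩
        exact absurd hf' hf

/-- The counterexample tree. -/
noncomputable def Ctree (k : ℕ) (s1 : S1) : LPTS (CSt L1 L2 k s1) Act where
  start := rootCSt L1 L2 k s1
  alpha := Set.univ
  trans x a := Ctrans L1 L2 k s1 x.val a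
  trans_mem _ _ _ _ := Set.mem_univ _
  finite_trans x a := Ctrans_finite L1 L2 k s1 x.val a

section SuppLemmas

variable {L1 L2}
variable {k : ℕ} {s1 : S1} {u : S2} (hf : failP L1 L2 (Rit L1 L2 k) s1 u)

theorem supp_liftTop : (liftTop hf).supp = Set.range (embTop hf) := by
  rw [liftTop, FDist.supp_map _ (embTop_injective hf), FDist.supp_toSupp, Set.image_univ]

variable {t' : S1} (hs : t' ∈ (wM L1 L2 hf).supp)

theorem supp_liftSub (ν0 : FDist (CSt L1 L2 k t')) :
    (liftSub hf hs ν0).supp = embSub hf hs '' ν0.supp :=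
  FDist.supp_map _ (embSub_injective hf hs)

end SuppLemmas

/-- No transition distribution puts mass on the root. -/
theorem Ctrans_pmf_root : ∀ (k : ℕ) (s1 : S1) (x : TT S1 S2 k) (a : Act) ν,
    ν ∈ Ctrans L1 L2 k s1 x a → ∀ hv, ν.pmf ⟨rootT S1 S2 k, hv⟩ = 0 := by
  intro k s1 x a ν hν hv
  match k, x with
  | 0, _ => exact absurd hν (Set.notMem_empty ν)
  | (k+1), Sum.inl _ =>
    obtain ⟨u, hf, _, rfl⟩ := hν
    apply FDist.pmf_map_of_not_range
    rintro ⟨z, hz⟩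
    have h' := congrArg Subtype.val hz
    simp only [embTop] at h'
    exact Sum.inr_ne_inl (h' : (Sum.inr _ : Unit ⊕ (S2 × S1 × TT S1 S2 k)) = Sum.inl ())
  | (k+1), Sum.inr (u, t', y) =>
    obtain ⟨hf, hs, ν0, hν0, rfl⟩ := hν
    apply FDist.pmf_map_of_not_range
    rintro ⟨z, hz⟩
    have h' := congrArg Subtype.val hz
    simp only [embSub] at h'
    exact Sum.inr_ne_inl (h' : (Sum.inr _ : Unit ⊕ (S2 × S1 × TT S1 S2 k)) = Sum.inl ())

/-- The graph of the projection, a simulation of the tree by `L1`. -/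
def graphP (k : ℕ) (s1 : S1) : Set (CSt L1 L2 k s1 × S1) :=
  {p | projT k s1 p.1.val = p.2}

theorem Ctree_strongSim : ∀ (k : ℕ) (s1 : S1),
    StrongSim (Ctree L1 L2 k s1) L1 (graphP L1 L2 k s1) := by
  intro k
  induction k with
  | zero =>
    intro s1 x s _ a ν hν
    exact absurd hν (Set.notMem_empty ν)
  | succ k ih =>
    rintro s1 ⟨xv, hv⟩ s hx a ν hν
    match xv with
    | Sum.inl _ =>
      obtain ⟨u, hf, rfl, rfl⟩ := hν
      have hs1 : s = s1 := hx.symm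
      subst hs1
      refine ⟨wM L1 L2 hf, wM_mem L1 L2 hf, ?_⟩
      intro T _
      rw [liftTop, FDist.prob_map, FDist.prob_toSupp]
      apply FDist.prob_mono
      rintro s' ⟨z, hz, rfl⟩
      exact ⟨embTop hf z, hz, projT_rootT k z.val⟩
    | Sum.inr (u, t', y) =>
      obtain ⟨hf, hs, ν0, hν0, rfl⟩ := hν
      have hy : valid L1 L2 k t' y := valid_sub L1 L2 hv
      have hsp : s = projT k t' y := hx.symm
      subst hsp
      obtain ⟨μ2, hμ2, hl⟩ := ih t' ⟨y, hy⟩ (projT k t' y) rfl a ν0 hν0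
      refine ⟨μ2, hμ2, ?_⟩
      intro T hT
      rw [liftSub, FDist.prob_map]
      have hTsupp : embSub hf hs ⁻¹' T ⊆ ν0.supp := by
        intro z hz
        have h1 := hT hz
        rw [supp_liftSub] at h1
        obtain ⟨w, hw, hww⟩ := h1
        rwa [← embSub_injective hf hs hww]
      refine le_trans (hl _ hTsupp) (μ2.prob_mono ?_)
      rintro s' ⟨z, hz, hproj⟩
      exact ⟨embSub hf hs z, hz, hproj⟩

/-- The tree is not simulated from any state pair outside the iterate. -/
theorem Ctree_not_sim : ∀ (k : ℕ) (s1 : S1) (s2 : S2), (s1, s2) ∉ Rit L1 L2 k →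
    ∀ Q, StrongSim (Ctree L1 L2 k s1) L2 Q → (rootCSt L1 L2 k s1, s2) ∉ Q := by
  intro k
  induction k with
  | zero => intro s1 s2 hR; exact absurd (Set.mem_univ _) hR
  | succ k ih =>
    intro s1 s2 hR Q hQ hmem
    have hf : failP L1 L2 (Rit L1 L2 k) s1 s2 :=
      failP_of_not_Fop L1 L2 (by rw [← Rit_succ]; exact hR)
    have htrans : liftTop hf ∈
        (Ctree L1 L2 (k+1) s1).trans (rootCSt L1 L2 (k+1) s1) (wA L1 L2 hf) :=
      ⟨s2, hf, rfl, rfl⟩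
    obtain ⟨μ2, hμ2, hl⟩ := hQ _ s2 hmem _ _ htrans
    apply wM_fail L1 L2 hf μ2 hμ2
    intro T hT
    -- the corresponding set of tree states
    have key : ∀ z : {s // s ∈ (wM L1 L2 hf).supp}, z.val ∈ T →
        ∀ u' : S2, (embTop hf z, u') ∈ Q → (z.val, u') ∈ Rit L1 L2 k := by
      intro z _ u' hxQ
      by_contra hnot
      refine ih z.val u' hnot {p | (embSub hf z.prop p.1, p.2) ∈ Q} ?_ ?_
      · -- Q restricted to the subtree is a strong simulation
        intro y u'' hyQ a ν0 hν0
        have hmm : liftSub hf z.prop ν0 ∈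
            (Ctree L1 L2 (k+1) s1).trans (embSub hf z.prop y) a :=
          ⟨hf, z.prop, ν0, hν0, rfl⟩
        obtain ⟨μ2', hμ2', hl'⟩ := hQ _ u'' hyQ a _ hmm
        refine ⟨μ2', hμ2', ?_⟩
        intro U hU
        have h1 : ν0.prob U = (liftSub hf z.prop ν0).prob (embSub hf z.prop '' U) := by
          rw [liftSub, FDist.prob_map, Set.preimage_image_eq U (embSub_injective hf z.prop)]
        have h2 : embSub hf z.prop '' U ⊆ (liftSub hf z.prop ν0).supp := by
          rw [supp_liftSub]
          exact Set.image_mono hU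
        rw [h1]
        refine le_trans (hl' _ h2) (μ2'.prob_mono ?_)
        rintro w ⟨x', ⟨z', hz', rfl⟩, hxQ'⟩
        exact ⟨z', hz', hxQ'⟩
      · -- the root of the subtree is related to u'
        have heq : embSub hf z.prop (rootCSt L1 L2 k z.val) = embTop hf z := rfl
        show (embSub hf z.prop (rootCSt L1 L2 k z.val), u') ∈ Q
        rw [heq]
        exact hxQ
    -- now compute the probabilities
    have hTeq : (wM L1 L2 hf).prob T
        = (liftTop hf).prob (embTop hf '' {z | z.val ∈ T}) := by
      rw [liftTop, FDist.prob_map,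
        Set.preimage_image_eq _ (embTop_injective hf), FDist.prob_toSupp]
      congr 1
      ext t
      constructor
      · intro ht; exact ⟨⟨t, hT ht⟩, ht, rfl⟩
      · rintro ⟨z, hz, rfl⟩; exact hz
    have hT'supp : embTop hf '' {z | z.val ∈ T} ⊆ (liftTop hf).supp := by
      rw [supp_liftTop]
      rintro x ⟨z, _, rfl⟩
      exact ⟨z, rfl⟩
    rw [hTeq]
    refine le_trans (hl _ hT'supp) (μ2.prob_mono ?_)
    rintro u' ⟨x, hxT', hxQ⟩
    obtain ⟨z, hzT, rfl⟩ := hxT'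
    exact ⟨z.val, hzT, key z hzT u' hxQ⟩

theorem Ctree_isTree : ∀ (k : ℕ) (s1 : S1), IsTree (Ctree L1 L2 k s1) := by
  intro k
  induction k with
  | zero =>
    intro s1
    constructor
    · intro s a μ hμ
      exact absurd hμ (Set.notMem_empty μ)
    · intro t ht
      exact absurd (Subtype.ext rfl : t = rootCSt L1 L2 0 s1) ht
  | succ k ih =>
    intro s1
    constructor
    · rintro s a μ hμ hsup
      have h0 := Ctrans_pmf_root L1 L2 (k+1) s1 s.val a μ hμ (valid_rootT L1 L2 (k+1) s1)
      have := (FDist.mem_supp_iff μ _).1 hsup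
      exact this h0
    · rintro ⟨xv, hv⟩ hne
      match xv with
      | Sum.inl v =>
        exact absurd (Subtype.ext rfl) hne
      | Sum.inr (u, t', y) =>
        have hv2 := hv
        simp only [valid] at hv2
        obtain ⟨hf, hs, hy⟩ := hv2
        by_cases hyroot : y = rootT S1 S2 k
        · subst hyroot
          refine ⟨(rootCSt L1 L2 (k+1) s1, wA L1 L2 hf, liftTop hf),
            ⟨⟨u, hf, rfl, rfl⟩, ?_⟩, ?_⟩
          · rw [supp_liftTop]
            exact ⟨⟨t', hs⟩, Subtype.ext rfl⟩
          · rintro ⟨s, a, ν⟩ ⟨hν, hsupp⟩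
            obtain ⟨sv, hsv⟩ := s
            match sv with
            | Sum.inl v0 =>
              obtain ⟨u0, hf0, ha, rfl⟩ := hν
              rw [supp_liftTop] at hsupp
              obtain ⟨z, hz⟩ := hsupp
              have h' := congrArg Subtype.val hz
              simp only [embTop] at h'
              have h2 := Sum.inr.inj h'
              have hu : u0 = u := congrArg (fun p => p.1) h2
              subst hu
              subst ha
              rfl
            | Sum.inr (u0, t0, y0) =>
              obtain ⟨hf0, hs0, ν0, hν0, rfl⟩ := hν
              rw [supp_liftSub] at hsupp
              obtain ⟨w, hw, hweq⟩ := hsupp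
              have h' := congrArg Subtype.val hweq
              simp only [embSub] at h'
              have h2 := Sum.inr.inj h'
              have hw3 : w.val = rootT S1 S2 k := congrArg (fun p => p.2.2) h2
              have h0 := Ctrans_pmf_root L1 L2 k t0 y0 a ν0 hν0 (hw3 ▸ w.prop)
              have hweq2 : w = ⟨rootT S1 S2 k, hw3 ▸ w.prop⟩ := Subtype.ext hw3
              rw [hweq2] at hw
              exact absurd h0 ((FDist.mem_supp_iff ν0 _).1 hw)
        · have hne' : (⟨y, hy⟩ : CSt L1 L2 k t') ≠ rootCSt L1 L2 k t' := by
            intro hcon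
            exact hyroot (congrArg Subtype.val hcon)
          obtain ⟨⟨s0, a0, ν00⟩, ⟨hmem0, hsupp0⟩, huniq⟩ := (ih t').2 ⟨y, hy⟩ hne'
          refine ⟨(embSub hf hs s0, a0, liftSub hf hs ν00),
            ⟨⟨hf, hs, ν00, hmem0, rfl⟩, ?_⟩, ?_⟩
          · rw [supp_liftSub]
            exact ⟨⟨y, hy⟩, hsupp0, Subtype.ext rfl⟩
          · rintro ⟨s, a, ν⟩ ⟨hν, hsupp⟩
            obtain ⟨sv, hsv⟩ := s
            match sv with
            | Sum.inl v0 =>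
              obtain ⟨u0, hf0, ha, rfl⟩ := hν
              rw [supp_liftTop] at hsupp
              obtain ⟨z, hz⟩ := hsupp
              have h' := congrArg Subtype.val hz
              simp only [embTop] at h'
              have h2 := Sum.inr.inj h'
              exact absurd (congrArg (fun p => p.2.2) h2).symm hyroot
            | Sum.inr (u0, t0, y0) =>
              obtain ⟨hf0, hs0, ν0, hν0, rfl⟩ := hν
              rw [supp_liftSub] at hsupp
              obtain ⟨w, hw, hweq⟩ := hsupp
              have h' := congrArg Subtype.val hweq
              simp only [embSub] at h'
              have h2 := Sum.inr.inj h'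
              have hu' : u = u0 := (congrArg (fun p => p.1) h2).symm
              have ht0' : t' = t0 := (congrArg (fun p => p.2.1) h2).symm
              subst hu'
              subst ht0'
              have hwy : w.val = y := congrArg (fun p => p.2.2) h2
              have hy0 : valid L1 L2 k t' y0 := valid_sub L1 L2 hsv
              have hwmem : (⟨y, hy⟩ : CSt L1 L2 k t') ∈ ν0.supp := by
                have hww : (⟨y, hy⟩ : CSt L1 L2 k t') = w := Subtype.ext hwy.symm
                rw [hww]
                exact hw
              have heq := huniq (⟨y0, hy0⟩, a, ν0) ⟨hν0, hwmem⟩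
              have e1 : (⟨y0, hy0⟩ : CSt L1 L2 k t') = s0 := congrArg (fun p => p.1) heq
              have e2 : a = a0 := congrArg (fun p => p.2.1) heq
              have e3 : ν0 = ν00 := congrArg (fun p => p.2.2) heq
              subst e1
              subst e2
              subst e3
              rfl

end Main

/-- If `L1 ⋠ L2` then there is a counterexample, which can be chosen to be a
stochastic tree `C` with `C ≼ L1` and `C ⋠ L2`. -/
theorem tree_counterexample {S1 S2 Act : Type} [Fintype S1] [Fintype S2]
    (L1 : LPTS S1 Act) (L2 : LPTS S2 Act) (h : ¬ Sim L1 L2) :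
    ∃ (T : Type) (i : Fintype T) (C : @LPTS T Act i),
      @IsTree T Act i C ∧ @Sim T S1 Act i _ C L1 ∧ ¬ @Sim T S2 Act i _ C L2 := by
  obtain ⟨k, hk⟩ := exists_not_Rit L1 L2 h
  refine ⟨CSt L1 L2 k L1.start, inferInstance, Ctree L1 L2 k L1.start,
    Ctree_isTree L1 L2 k L1.start, ?_, ?_⟩
  · exact ⟨graphP L1 L2 k L1.start, Ctree_strongSim L1 L2 k L1.start,
      projT_rootT k L1.start⟩
  · rintro ⟨Q, hQ, hmemQ⟩
    exact Ctree_not_sim L1 L2 k L1.start L2.start hk Q hQ hmemQ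
end

section
/- Any execution mapping from an LPTS C to an LPTS L is a strong simulation; consequently if C has an execution mapping to L then C ≼ L. -/
open Classical

/-- `M` is an execution mapping from `C` to `L`: every transition of `C` is
matched by a transition of `L` from `M c` whose distribution agrees with that of
`C` under the injective restriction of `M` to the support. -/
def ExecMap {S1 S2 Act : Type} [Fintype S1] [Fintype S2]
    (M : S1 → S2) (C : LPTS S1 Act) (L : LPTS S2 Act) : Prop :=
  ∀ c a μc, μc ∈ C.trans c a → ∃ μ ∈ L.trans (M c) a,
    Set.InjOn M μc.supp ∧ ∀ c' ∈ μc.supp, μc.pmf c' = μ.pmf (M c')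

/-- Any execution mapping is a strong simulation; hence if `C` has an execution
mapping to `L` (sending start to start) then `C ≼ L`. -/
theorem execMap_strongSim {S1 S2 Act : Type} [Fintype S1] [Fintype S2]
    (M : S1 → S2) (C : LPTS S1 Act) (L : LPTS S2 Act) (h : ExecMap M C L) :
    StrongSim C L {p : S1 × S2 | p.2 = M p.1} ∧
    (M C.start = L.start → Sim C L) := by
  have hSS : StrongSim C L {p : S1 × S2 | p.2 = M p.1} := by
    rintro s1 s2 hR a μc hμc
    obtain ⟨μ, hμL, hinj, hpmf⟩ := h s1 a μc hμc
    have hs2 : s2 = M s1 := hR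
    subst hs2
    refine ⟨μ, hμL, ?_⟩
    intro T hT
    have key : ∀ s ∈ Finset.univ.filter (· ∈ T), μc.pmf s = μ.pmf (M s) := by
      intro s hs
      exact hpmf s (hT (Finset.mem_filter.mp hs).2)
    have h1 : μc.prob T = ∑ s ∈ Finset.univ.filter (· ∈ T), μ.pmf (M s) := by
      rw [FDist.prob, ← Finset.sum_filter]
      exact Finset.sum_congr rfl key
    have h2 : ∑ s ∈ Finset.univ.filter (· ∈ T), μ.pmf (M s)
        = ∑ t ∈ (Finset.univ.filter (· ∈ T)).image M, μ.pmf t := by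
      rw [Finset.sum_image]
      intro x hx y hy hxy
      exact hinj (hT (Finset.mem_filter.mp hx).2) (hT (Finset.mem_filter.mp hy).2) hxy
    have h3 : (Finset.univ.filter (· ∈ T)).image M ⊆
        Finset.univ.filter (· ∈ relImage {p : S1 × S2 | p.2 = M p.1} T) := by
      intro t ht
      obtain ⟨s, hs, rfl⟩ := Finset.mem_image.mp ht
      exact Finset.mem_filter.mpr ⟨Finset.mem_univ _,
        ⟨s, (Finset.mem_filter.mp hs).2, rfl⟩⟩
    rw [h1, h2, FDist.prob, ← Finset.sum_filter]
    exact Finset.sum_le_sum_of_subset_of_nonneg h3 (fun t _ _ => μ.nonneg t)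
  exact ⟨hSS, fun hstart => ⟨_, hSS, hstart.symm⟩⟩
end
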